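/- arXiv:2510.18597 — 3 statements merged into one kernel-verified Lean document; each statement's English description precedes it below -/
import Mathlib

section
/- Cyclic invariance of the wedge product: let N ≥ 1 be an integer and let ω, η : ℤ/Nℤ → ℝ be two functions satisfying ∑_{i ∈ ℤ/Nℤ} ω(i) = 0 and ∑_{i ∈ ℤ/Nℤ} η(i) = 0. Then for every integer k, ∑_{0 ≤ i < j ≤ N−1} ( ω(i+k)·η(j+k) − ω(j+k)·η(i+k) ) = ∑_{0 ≤ i < j ≤ N−1} ( ω(i)·η(j) − ω(j)·η(i) ), where the arguments i+k and j+k are taken modulo N. (Lemma 5.2 of the paper, where N = 4g and ω(e_i), η(e_i) are the values of two co-boundaries on the boundary arcs e_1, …, e_{4g} of a fundamental domain; the hypotheses ∑ω = ∑η = 0 express that co-boundaries sum to zero over the boundary of the fundamental domain.) -/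
open Finset

-- combinatorial shift lemma
lemma shift_double_sum (N : ℕ) (hN : 1 ≤ N) (f : ℕ → ℕ → ℝ) :
    ∑ i ∈ Finset.range N, ∑ j ∈ Finset.Ico (i+1) N, f (i+1) (j+1)
      = (∑ i ∈ Finset.range N, ∑ j ∈ Finset.Ico (i+1) N, f i j)
        + (∑ i ∈ Finset.Ico 1 N, f i N) - ∑ j ∈ Finset.Ico 1 N, f 0 j := by
  have h1 : ∑ i ∈ Finset.range N, ∑ j ∈ Finset.Ico (i+1) N, f (i+1) (j+1)
      = ∑ i ∈ Finset.Ico 1 (N+1), ∑ j ∈ Finset.Ico (i+1) (N+1), f i j := by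
    rw [Finset.sum_Ico_eq_sum_range]
    simp only [Nat.add_sub_cancel]
    refine Finset.sum_congr rfl fun i _ => ?_
    rw [Finset.sum_Ico_eq_sum_range, Finset.sum_Ico_eq_sum_range]
    have hc : N - (i+1) = N + 1 - (1 + i + 1) := by omega
    rw [← hc]
    refine Finset.sum_congr rfl fun j _ => ?_
    congr 1 <;> omega
  have h2 : ∑ i ∈ Finset.Ico 1 (N+1), ∑ j ∈ Finset.Ico (i+1) (N+1), f i j
      = (∑ i ∈ Finset.range N, ∑ j ∈ Finset.Ico (i+1) N, f i j)
        + (∑ i ∈ Finset.Ico 1 N, f i N) - ∑ j ∈ Finset.Ico 1 N, f 0 j := by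
    rw [Finset.sum_Ico_succ_top hN]
    have he : (Finset.Ico (N+1) (N+1)) = ∅ := by simp
    rw [he, Finset.sum_empty, add_zero]
    have h3 : ∀ i ∈ Finset.Ico 1 N, ∑ j ∈ Finset.Ico (i+1) (N+1), f i j
        = ∑ j ∈ Finset.Ico (i+1) N, f i j + f i N := by
      intro i hi
      rw [Finset.mem_Ico] at hi
      rw [Finset.sum_Ico_succ_top (show i+1 ≤ N by omega)]
    rw [Finset.sum_congr rfl h3, Finset.sum_add_distrib]
    have h4 : ∑ i ∈ Finset.range N, ∑ j ∈ Finset.Ico (i+1) N, f i j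
        = (∑ j ∈ Finset.Ico 1 N, f 0 j) + ∑ i ∈ Finset.Ico 1 N, ∑ j ∈ Finset.Ico (i+1) N, f i j := by
      rw [Finset.range_eq_Ico, Finset.sum_eq_sum_Ico_succ_bot (by omega : 0 < N)]
    rw [h4]; ring
  rw [h1, h2]

lemma range_sum_eq_univ (N : ℕ) [NeZero N] (f : ZMod N → ℝ) :
    ∑ i ∈ Finset.range N, f (i : ZMod N) = ∑ x : ZMod N, f x := by
  refine Finset.sum_nbij' (fun i => (i : ZMod N)) (fun x => x.val)
    (fun a _ => Finset.mem_univ _) (fun x _ => Finset.mem_range.2 (ZMod.val_lt x))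
    (fun a ha => ?_) (fun x _ => ZMod.natCast_rightInverse x) (fun a _ => rfl)
  exact ZMod.val_natCast_of_lt (Finset.mem_range.1 ha)

lemma shifted_sum_zero (N : ℕ) (hN : 1 ≤ N) (f : ZMod N → ℝ)
    (hf : ∑ i ∈ Finset.range N, f (i : ZMod N) = 0) (c : ZMod N) :
    ∑ i ∈ Finset.range N, f ((i : ZMod N) + c) = 0 := by
  haveI : NeZero N := ⟨by omega⟩
  rw [range_sum_eq_univ N (fun x => f (x + c))]
  rw [range_sum_eq_univ N f] at hf
  rw [← hf]
  exact Fintype.sum_equiv (Equiv.addRight c) _ _ (fun x => rfl)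

lemma wedge_step (N : ℕ) (hN : 1 ≤ N) (ω η : ZMod N → ℝ)
    (hω : ∑ i ∈ Finset.range N, ω (i : ZMod N) = 0)
    (hη : ∑ i ∈ Finset.range N, η (i : ZMod N) = 0) (c : ZMod N) :
    ∑ i ∈ Finset.range N, ∑ j ∈ Finset.Ico (i + 1) N,
        (ω ((i : ZMod N) + (c + 1)) * η ((j : ZMod N) + (c + 1)) -
          ω ((j : ZMod N) + (c + 1)) * η ((i : ZMod N) + (c + 1)))
      = ∑ i ∈ Finset.range N, ∑ j ∈ Finset.Ico (i + 1) N,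
        (ω ((i : ZMod N) + c) * η ((j : ZMod N) + c) -
          ω ((j : ZMod N) + c) * η ((i : ZMod N) + c)) := by
  set f : ℕ → ℕ → ℝ := fun a b =>
    ω ((a : ZMod N) + c) * η ((b : ZMod N) + c) -
      ω ((b : ZMod N) + c) * η ((a : ZMod N) + c) with hf
  have hcast : ∀ i : ℕ, (i : ZMod N) + (c + 1) = ((i + 1 : ℕ) : ZMod N) + c := by
    intro i; push_cast; ring
  have hL : ∑ i ∈ Finset.range N, ∑ j ∈ Finset.Ico (i + 1) N,
        (ω ((i : ZMod N) + (c + 1)) * η ((j : ZMod N) + (c + 1)) -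
          ω ((j : ZMod N) + (c + 1)) * η ((i : ZMod N) + (c + 1)))
      = ∑ i ∈ Finset.range N, ∑ j ∈ Finset.Ico (i + 1) N, f (i + 1) (j + 1) := by
    refine Finset.sum_congr rfl fun i _ => Finset.sum_congr rfl fun j _ => ?_
    rw [hf]; simp only [hcast]
  rw [hL, shift_double_sum N hN f]
  have hsum : ∑ i ∈ Finset.Ico 1 N, f i N - ∑ j ∈ Finset.Ico 1 N, f 0 j = 0 := by
    have hN0 : ∀ i : ℕ, f i N = - f 0 i := by
      intro i; rw [hf]; simp only [ZMod.natCast_self, Nat.cast_zero, zero_add]; ring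
    have : ∑ i ∈ Finset.Ico 1 N, f i N = - ∑ j ∈ Finset.Ico 1 N, f 0 j := by
      simp only [hN0]
      exact Finset.sum_neg_distrib _
    rw [this]
    have hω' : ∑ i ∈ Finset.Ico 1 N, ω ((i : ZMod N) + c) = - ω ((0 : ℕ) + c) := by
      have := shifted_sum_zero N hN ω hω c
      rw [Finset.range_eq_Ico, Finset.sum_eq_sum_Ico_succ_bot (by omega : 0 < N)] at this
      push_cast at this ⊢
      linarith
    have hη' : ∑ i ∈ Finset.Ico 1 N, η ((i : ZMod N) + c) = - η ((0 : ℕ) + c) := by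
      have := shifted_sum_zero N hN η hη c
      rw [Finset.range_eq_Ico, Finset.sum_eq_sum_Ico_succ_bot (by omega : 0 < N)] at this
      push_cast at this ⊢
      linarith
    have hexp : ∑ j ∈ Finset.Ico 1 N, f 0 j
        = ω ((0:ZMod N) + c) * (∑ j ∈ Finset.Ico 1 N, η ((j : ZMod N) + c))
          - (∑ j ∈ Finset.Ico 1 N, ω ((j : ZMod N) + c)) * η ((0:ZMod N) + c) := by
      rw [hf, Finset.mul_sum, Finset.sum_mul, ← Finset.sum_sub_distrib]
      refine Finset.sum_congr rfl fun j _ => ?_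
      push_cast; ring
    rw [hexp, hη', hω']
    push_cast
    ring
  linarith [hsum]


/-- Lemma 5.2: cyclic invariance of the wedge product. If `ω, η : ℤ/Nℤ → ℝ`
both sum to zero, then for every integer `k`,
`∑_{0 ≤ i < j ≤ N-1} (ω(i+k)η(j+k) − ω(j+k)η(i+k))` is independent of `k`. -/
theorem wedge_product_cyclic_invariance
    (N : ℕ) (hN : 1 ≤ N) (ω η : ZMod N → ℝ)
    (hω : ∑ i ∈ Finset.range N, ω (i : ZMod N) = 0)
    (hη : ∑ i ∈ Finset.range N, η (i : ZMod N) = 0) (k : ℤ) :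
    ∑ i ∈ Finset.range N, ∑ j ∈ Finset.Ico (i + 1) N,
        (ω ((i : ZMod N) + (k : ZMod N)) * η ((j : ZMod N) + (k : ZMod N)) -
          ω ((j : ZMod N) + (k : ZMod N)) * η ((i : ZMod N) + (k : ZMod N)))
      = ∑ i ∈ Finset.range N, ∑ j ∈ Finset.Ico (i + 1) N,
        (ω (i : ZMod N) * η (j : ZMod N) - ω (j : ZMod N) * η (i : ZMod N)) := by
  haveI : NeZero N := ⟨by omega⟩
  have key : ∀ m : ℕ,
      ∑ i ∈ Finset.range N, ∑ j ∈ Finset.Ico (i + 1) N,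
        (ω ((i : ZMod N) + (m : ZMod N)) * η ((j : ZMod N) + (m : ZMod N)) -
          ω ((j : ZMod N) + (m : ZMod N)) * η ((i : ZMod N) + (m : ZMod N)))
      = ∑ i ∈ Finset.range N, ∑ j ∈ Finset.Ico (i + 1) N,
        (ω (i : ZMod N) * η (j : ZMod N) - ω (j : ZMod N) * η (i : ZMod N)) := by
    intro m
    induction m with
    | zero => simp
    | succ n ih =>
      have hc : ((n + 1 : ℕ) : ZMod N) = (n : ZMod N) + 1 := by push_cast; ring
      rw [hc, wedge_step N hN ω η hω hη (n : ZMod N), ih]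
  obtain ⟨m, hm⟩ := ZMod.natCast_zmod_surjective ((k : ℤ) : ZMod N)
  rw [← hm]
  exact key m
end

section
/- Discrete Stokes boundary identity: let N be a natural number and let ω, η : {1, …, N} → ℝ be such that ∑_{j=1}^{N} ω_j = 0. Define the partial sums α_i = ∑_{j=1}^{i} ω_j for 0 ≤ i ≤ N (so α_0 = 0 and α_N = 0). Then ∑_{i=1}^{N} ((α_{i−1} + α_i)/2) · η_i = (1/2) · ∑_{1 ≤ i < j ≤ N} ( ω_i·η_j − ω_j·η_i ). (This is the key computation in the face-boundary-insertion step of the proof of the discrete Stokes formula, Proposition 5.4 of the paper, where ω_i = ω(ε_i) and η_i = η(ε_i) are the values of two co-boundaries on the arcs ε_1, …, ε_{4g} of a face boundary and α is the potential of ω vanishing at the starting vertex.) -/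
/-- The key computation in the proof of the discrete Stokes formula
(Proposition 5.4): for a sequence `ω_1, …, ω_N` summing to zero with partial
sums `α_i = ∑_{j=1}^{i} ω_j`,
`∑_{i=1}^{N} ((α_{i-1} + α_i)/2) η_i = (1/2) ∑_{1 ≤ i < j ≤ N} (ω_i η_j − ω_j η_i)`. -/
theorem discrete_stokes_boundary_identity
    (N : ℕ) (ω η : ℕ → ℝ)
    (hsum : ∑ j ∈ Finset.Icc 1 N, ω j = 0)
    (α : ℕ → ℝ) (hα : ∀ i : ℕ, α i = ∑ j ∈ Finset.Icc 1 i, ω j) :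
    ∑ i ∈ Finset.Icc 1 N, ((α (i - 1) + α i) / 2) * η i
      = (1 / 2) * ∑ i ∈ Finset.Icc 1 N, ∑ j ∈ Finset.Ioc i N,
          (ω i * η j - ω j * η i) := by
  have hsplit : ∀ i ∈ Finset.Icc 1 N,
      ∑ j ∈ Finset.Ioc i N, ω j = - α i := by
    intro i hi
    simp only [Finset.mem_Icc] at hi
    have hu : Finset.Icc 1 i ∪ Finset.Ioc i N = Finset.Icc 1 N := by
      ext a
      simp only [Finset.mem_union, Finset.mem_Icc, Finset.mem_Ioc]
      omega
    have hd : Disjoint (Finset.Icc 1 i) (Finset.Ioc i N) := by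
      apply Finset.disjoint_left.mpr
      intro a ha hb
      simp only [Finset.mem_Icc] at ha
      simp only [Finset.mem_Ioc] at hb
      omega
    have := Finset.sum_union hd (f := ω)
    rw [hu, hsum] at this
    rw [hα i]
    linarith
  have hswap : ∑ i ∈ Finset.Icc 1 N, ∑ j ∈ Finset.Ioc i N, ω i * η j
      = ∑ i ∈ Finset.Icc 1 N, α (i - 1) * η i := by
    rw [Finset.sum_comm' (s' := fun j => Finset.Ico 1 j) (t' := Finset.Icc 1 N)
      (by intro i j; simp only [Finset.mem_Icc, Finset.mem_Ioc, Finset.mem_Ico]; omega)]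
    apply Finset.sum_congr rfl
    intro j hj
    simp only [Finset.mem_Icc] at hj
    rw [← Finset.sum_mul, hα (j - 1)]
    congr 1
  have h2 : ∑ i ∈ Finset.Icc 1 N, ∑ j ∈ Finset.Ioc i N, (ω i * η j - ω j * η i)
      = ∑ i ∈ Finset.Icc 1 N, (α (i - 1) + α i) * η i := by
    have : ∀ i ∈ Finset.Icc 1 N,
        ∑ j ∈ Finset.Ioc i N, (ω i * η j - ω j * η i)
          = (∑ j ∈ Finset.Ioc i N, ω i * η j) + α i * η i := by
      intro i hi
      rw [Finset.sum_sub_distrib, ← Finset.sum_mul, hsplit i hi]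
      ring
    rw [Finset.sum_congr rfl this, Finset.sum_add_distrib, hswap,
      ← Finset.sum_add_distrib]
    apply Finset.sum_congr rfl
    intro i _
    ring
  rw [h2, Finset.mul_sum]
  apply Finset.sum_congr rfl
  intro i _
  ring
end

section
/- Let V be a finite directed graph (a finite type V together with a relation r : V → V → Prop) such that every vertex has at most one in-neighbor (for each v, the set {u : r u v} has at most one element), and such that every vertex that is not a sink has exactly two out-neighbors (for each v with some w satisfying r v w, the set {w : r v w} has exactly two elements). Then the number of non-sink vertices is at most the number of sinks. (This is the abstract content of the discharging argument proving the claim |F(H)| ≤ |∂H| in Appendix C of the paper, where the non-sinks are the faces of the subgraph H of the universal cover of a system of quads, the sinks are the boundary edge sides of H, out-edges go to the two adjacent faces or boundary edges of one level higher, and the in-degree bound comes from the fact that each face of level i is adjacent to at most one face of level i−1.) -/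
/-- Discharging argument of Appendix C: in a finite directed graph in which
every vertex has at most one in-neighbor and every non-sink vertex has exactly
two out-neighbors, the number of non-sinks is at most the number of sinks. -/
theorem nonSinks_le_sinks
    {V : Type*} [Fintype V] (r : V → V → Prop) [DecidableRel r]
    (hin : ∀ v : V, (Finset.univ.filter (fun u => r u v)).card ≤ 1)
    (hout : ∀ v : V, (∃ w, r v w) → (Finset.univ.filter (fun w => r v w)).card = 2) :
    (Finset.univ.filter (fun v : V => ∃ w, r v w)).card ≤
      (Finset.univ.filter (fun v : V => ¬ ∃ w, r v w)).card := by
  classical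
  set N := Finset.univ.filter (fun v : V => ∃ w, r v w) with hN
  set S := Finset.univ.filter (fun v : V => ¬ ∃ w, r v w) with hS
  have hsplit : N.card + S.card = Fintype.card V := by
    rw [hN, hS, Finset.card_filter_add_card_filter_not]
    exact Finset.card_univ
  have key : 2 * N.card ≤ Fintype.card V := by
    have h1 : 2 * N.card = ∑ v : V, (Finset.univ.filter (fun w => r v w)).card := by
      rw [two_mul]
      calc N.card + N.card = ∑ v ∈ N, 2 := by
            rw [Finset.sum_const, smul_eq_mul]; ring
        _ = ∑ v ∈ N, (Finset.univ.filter (fun w => r v w)).card := by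
            apply Finset.sum_congr rfl
            intro v hv
            rw [hN, Finset.mem_filter] at hv
            exact (hout v hv.2).symm
        _ = ∑ v : V, (Finset.univ.filter (fun w => r v w)).card := by
            apply Finset.sum_subset (Finset.subset_univ _)
            intro v _ hv
            rw [hN, Finset.mem_filter] at hv
            push_neg at hv
            have : Finset.univ.filter (fun w => r v w) = ∅ := by
              ext w
              simp only [Finset.mem_filter, Finset.mem_univ, true_and,
                Finset.notMem_empty, iff_false]
              exact fun h => hv (Finset.mem_univ v) w h
            rw [this, Finset.card_empty]
    have h2 : ∑ v : V, (Finset.univ.filter (fun w => r v w)).card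
        = ∑ v : V, (Finset.univ.filter (fun u => r u v)).card := by
      simp only [Finset.card_filter]
      exact Finset.sum_comm
    have h3 : ∑ v : V, (Finset.univ.filter (fun u => r u v)).card
        ≤ ∑ _v : V, 1 := Finset.sum_le_sum (fun v _ => hin v)
    simpa [h1, h2] using h3.trans_eq (by simp)
  omega
end
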